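/- With P_n(x) = det(M_n(x)) as above, for all n > 1: x^{2n−2} = P_{n−1}(x)² − P_n(x)·P_{n−2}(x). -/
import Mathlib

open Matrix Polynomial

noncomputable def Mmat (n : ℕ) (x : ℂ) : Matrix (Fin n) (Fin n) ℂ :=
  Matrix.of fun i j =>
    if (i : ℕ) = (j : ℕ) then 1
    else if (i : ℕ) + 1 = (j : ℕ) ∨ (j : ℕ) + 1 = (i : ℕ) then x else 0

noncomputable def P (n : ℕ) (x : ℂ) : ℂ := (Mmat n x).det

lemma Mmat_succ_sub (n : ℕ) (x : ℂ) :
    (Mmat (n+1) x).submatrix Fin.succ Fin.succ = Mmat n x := by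
  ext i j
  simp [Mmat, Fin.val_succ]

lemma P_rec (n : ℕ) (x : ℂ) : P (n+2) x = P (n+1) x - x^2 * P n x := by
  have hB : ((Mmat (n+2) x).submatrix Fin.succ ((1 : Fin (n+2)).succAbove)).det
      = x * P n x := by
    rw [Matrix.det_succ_column_zero, Fin.sum_univ_succ]
    have hz : ∀ i : Fin n,
        (Mmat (n+2) x).submatrix Fin.succ ((1 : Fin (n+2)).succAbove) i.succ 0 = 0 := by
      intro i
      simp [Mmat, Fin.one_succAbove_zero, Fin.val_succ]
    simp only [hz, mul_zero, zero_mul, Finset.sum_const_zero, add_zero]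
    have he : (((Mmat (n+2) x).submatrix Fin.succ ((1 : Fin (n+2)).succAbove)).submatrix
        (0 : Fin (n+1)).succAbove Fin.succ) = Mmat n x := by
      ext i j
      simp [Mmat, Fin.one_succAbove_succ, Fin.val_succ]
    have h0 : (Mmat (n+2) x).submatrix Fin.succ ((1 : Fin (n+2)).succAbove) 0 0 = x := by
      simp [Mmat, Fin.one_succAbove_zero]
    rw [he, h0]
    simp [P, Fin.val_zero]
  have := Matrix.det_succ_row_zero (Mmat (n+2) x)
  rw [Fin.sum_univ_succ, Fin.sum_univ_succ] at this
  have hz : ∀ j : Fin n, Mmat (n+2) x 0 j.succ.succ = 0 := by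
    intro j
    simp [Mmat, Fin.val_succ]
  simp only [hz, mul_zero, zero_mul, Finset.sum_const_zero, add_zero] at this
  have h00 : Mmat (n+2) x 0 0 = 1 := by simp [Mmat]
  have h01 : Mmat (n+2) x 0 1 = x := by simp [Mmat]
  simp only [Fin.succ_zero_eq_one] at this
  rw [h00, h01, Fin.succAbove_zero, Mmat_succ_sub, hB] at this
  simp only [Fin.val_zero, Fin.val_one, pow_zero, pow_one] at this
  simp only [P] at this ⊢
  rw [this]
  ring

lemma P_key (m : ℕ) (x : ℂ) :
    x ^ (2 * m + 2) = P (m+1) x ^ 2 - P (m+2) x * P m x := by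
  induction m with
  | zero =>
    have h0 : P 0 x = 1 := by simp [P]
    have h1 : P 1 x = 1 := by
      simp [P, Matrix.det_fin_one, Mmat]
    rw [P_rec, h0, h1]; ring
  | succ k ih =>
    rw [P_rec (k+1) x]
    have : P (k+2) x ^ 2 - (P (k+2) x - x^2 * P (k+1) x) * P (k+1) x
        = P (k+2) x * (P (k+2) x - P (k+1) x) + x^2 * P (k+1) x ^ 2 := by ring
    rw [this]
    have h2 : P (k+2) x - P (k+1) x = - (x^2 * P k x) := by
      rw [P_rec]; ring
    rw [h2]
    have : P (k+2) x * -(x^2 * P k x) + x^2 * P (k+1) x ^2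
        = x^2 * (P (k+1) x ^ 2 - P (k+2) x * P k x) := by ring
    rw [this, ← ih]
    ring

theorem P_catalan_like (n : ℕ) (hn : 1 < n) (x : ℂ) :
    x ^ (2 * n - 2) = P (n - 1) x ^ 2 - P n x * P (n - 2) x := by
  obtain ⟨m, rfl⟩ : ∃ m, n = m + 2 := ⟨n - 2, by omega⟩
  have : 2 * (m + 2) - 2 = 2 * m + 2 := by omega
  rw [this]
  have h1 : m + 2 - 1 = m + 1 := by omega
  have h2 : m + 2 - 2 = m := by omega
  rw [h1, h2]
  exact P_key m x
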